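/- Let R^P be a probabilistic abstract reduction system and s an element for which the set Δ∞(s) of infinite paths from s is countable. Define the probability of an infinite path s = s₀ → s₁ → s₂ → ⋯ as the infinite product ∏_{i≥1} P(s_{i-1}, s_i), i.e., the limit of the nonincreasing sequence of partial products ∏_{i=1}^n P(s_{i-1}, s_i). Then P(s →∞) = ∑_{δ ∈ Δ∞(s)} P(δ). -/

import Mathlib

open scoped ENNReal NNReal

/-- An element `t` is a *normal form* of the reduction relation `r`
if there is no `u` with `r t u`. -/
def NormalForm {A : Type*} (r : A → A → Prop) (t : A) : Prop := ¬∃ u, r t u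

/-- `NFof r s` is the set of normal forms reachable from `s`
via the reflexive-transitive closure of `r`. -/
def NFof {A : Type*} (r : A → A → Prop) (s : A) : Set A :=
  {t | NormalForm r t ∧ Relation.ReflTransGen r s t}

/-- `l` is a finite path from `s` to `t`: a nonempty list starting at `s`,
ending at `t`, whose consecutive elements are related by `r`.
(A list `[s₀, s₁, …, sₙ]` represents the path `s₀ → s₁ → ⋯ → sₙ`, `n ≥ 0`.) -/
def IsPath {A : Type*} (r : A → A → Prop) (s t : A) (l : List A) : Prop :=
  l.Chain' r ∧ l.head? = some s ∧ l.getLast? = some t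

/-- Confluence of an abstract reduction system. -/
def Confluent {A : Type*} (r : A → A → Prop) : Prop :=
  ∀ s s₁ s₂, Relation.ReflTransGen r s s₁ → Relation.ReflTransGen r s s₂ →
    ∃ t, Relation.ReflTransGen r s₁ t ∧ Relation.ReflTransGen r s₂ t

/-- An ARS is normalizing if every element reaches some normal form. -/
def Normalizing {A : Type*} (r : A → A → Prop) : Prop :=
  ∀ s, ∃ t, NormalForm r t ∧ Relation.ReflTransGen r s t

/-- A probabilistic abstract reduction system (PARS) on a countable set `A`:
a reduction relation `rel` and probabilities `P : A → A → ℝ≥0` with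
`P s t > 0` iff `s → t`, and `∑ₜ P s t = 1` for every reducible `s`. -/
structure PARS (A : Type*) [Countable A] where
  rel : A → A → Prop
  P : A → A → ℝ≥0
  pos_iff : ∀ s t, 0 < P s t ↔ rel s t
  sum_one : ∀ s, (∃ t, rel s t) → ∑' t, (P s t : ℝ≥0∞) = 1

namespace PARS

variable {A : Type*} [Countable A]

/-- The probability of a finite path `[s₀, s₁, …, sₙ]`,
namely `∏_{i=1}^n P(s_{i-1}, s_i)`. -/
noncomputable def pathProb (S : PARS A) (l : List A) : ℝ≥0∞ :=
  ((l.zip l.tail).map fun p => (S.P p.1 p.2 : ℝ≥0∞)).prod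

/-- `P(s →* t)`: the sum, over all finite paths from `s` to `t`,
of the path probabilities. -/
noncomputable def probReach (S : PARS A) (s t : A) : ℝ≥0∞ :=
  ∑' l : {l : List A // IsPath S.rel s t l}, S.pathProb l.1

/-- `∑_{t ∈ NF(s)} P(s →* t)`. -/
noncomputable def probNF (S : PARS A) (s : A) : ℝ≥0∞ :=
  ∑' t : NFof S.rel s, S.probReach s t.1

/-- `P(s →∞) := 1 - ∑_{t ∈ NF(s)} P(s →* t)`, the probability of diverging. -/
noncomputable def probDiverge (S : PARS A) (s : A) : ℝ :=
  1 - (S.probNF s).toReal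

/-- Almost-sure termination: every element diverges with probability `0`. -/
def ASTerminating (S : PARS A) : Prop := ∀ s, S.probDiverge s = 0

/-- Almost-sure convergence: whenever `s →* s₁` and `s →* s₂`, there is a
normal form `t` with `s₁ →* t`, `s₂ →* t` and `P(s₁ →* t) = P(s₂ →* t) = 1`. -/
def ASConvergent (S : PARS A) : Prop :=
  ∀ s s₁ s₂, Relation.ReflTransGen S.rel s s₁ → Relation.ReflTransGen S.rel s s₂ →
    ∃ t, NormalForm S.rel t ∧ Relation.ReflTransGen S.rel s₁ t ∧
      Relation.ReflTransGen S.rel s₂ t ∧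
      S.probReach s₁ t = 1 ∧ S.probReach s₂ t = 1

/-- Local almost-sure convergence: whenever `s → s₁` and `s → s₂`, there is a
normal form `t` with `s₁ →* t`, `s₂ →* t` and `P(s₁ →* t) = P(s₂ →* t) = 1`. -/
def LocallyASConvergent (S : PARS A) : Prop :=
  ∀ s s₁ s₂, S.rel s s₁ → S.rel s s₂ →
    ∃ t, NormalForm S.rel t ∧ Relation.ReflTransGen S.rel s₁ t ∧
      Relation.ReflTransGen S.rel s₂ t ∧
      S.probReach s₁ t = 1 ∧ S.probReach s₂ t = 1

end PARS

section Aux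
open MeasureTheory
namespace PARS
variable {A : Type*} [Countable A] (S : PARS A)

/-- Dominated convergence for antitone sequences of tsums in `ℝ≥0∞`. -/
theorem tsum_iInf_antitone {ι : Type*} [Countable ι] (f : ℕ → ι → ℝ≥0∞)
    (hanti : ∀ i, Antitone fun n => f n i) (hfin : ∑' i, f 0 i ≠ ∞) :
    ⨅ n, ∑' i, f n i = ∑' i, ⨅ n, f n i := by
  letI : MeasurableSpace ι := ⊤
  haveI : MeasurableSingletonClass ι := ⟨fun _ => trivial⟩
  have hm : ∀ n, Measurable (fun i => f n i) := fun n s _ => trivial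
  have h := lintegral_iInf (μ := Measure.count) hm
    (fun m n hmn i => hanti i hmn) (by rwa [lintegral_count])
  simp only [lintegral_count] at h
  exact h.symm

theorem pathProb_singleton (x : A) : S.pathProb [x] = 1 := by
  simp [pathProb]

theorem pathProb_cons_cons (x y : A) (l : List A) :
    S.pathProb (x :: y :: l) = (S.P x y : ℝ≥0∞) * S.pathProb (y :: l) := by
  simp [pathProb]

theorem pathProb_ne_top (l : List A) : S.pathProb l ≠ ∞ := by
  induction l with
  | nil => simp [pathProb]
  | cons x l ih =>
    cases l with
    | nil => simp [pathProb]
    | cons y l =>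
      rw [pathProb_cons_cons]
      exact ENNReal.mul_ne_top (by simp) ih

theorem pathProb_append_singleton (p : List A) (h : p ≠ []) (t : A) :
    S.pathProb (p ++ [t]) = S.pathProb p * (S.P (p.getLast h) t : ℝ≥0∞) := by
  induction p with
  | nil => simp at h
  | cons x p ih =>
    cases p with
    | nil => simp [pathProb]
    | cons y p =>
      simp only [List.cons_append]
      rw [pathProb_cons_cons, pathProb_cons_cons, List.getLast_cons (by simp)]
      have h2 := ih (by simp)
      simp only [List.cons_append] at h2
      rw [h2]
      ring

theorem pathProb_map_range (f : ℕ → A) (n : ℕ) :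
    S.pathProb ((List.range (n + 1)).map f) =
      ∏ i ∈ Finset.range n, (S.P (f i) (f (i + 1)) : ℝ≥0∞) := by
  induction n generalizing f with
  | zero => simp [pathProb, show List.range 1 = [0] from rfl]
  | succ n ih =>
    have h1 : (List.range (n + 2)).map f = f 0 :: (List.range (n + 1)).map (fun i => f (i + 1)) := by
      rw [List.range_succ_eq_map]
      simp [Function.comp]
    have h2 : (List.range (n + 1)).map (fun i => f (i + 1)) =
        f 1 :: (List.range n).map (fun i => f (i + 2)) := by
      rw [List.range_succ_eq_map]
      simp [Function.comp]
    rw [h1, h2, pathProb_cons_cons, ← h2, ih, Finset.prod_range_succ']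
    ring

theorem chain'_map_range (f : ℕ → A) (hf : ∀ i, S.rel (f i) (f (i + 1))) (n : ℕ) :
    ((List.range (n + 1)).map f).Chain' S.rel := by
  induction n generalizing f with
  | zero => simp [show List.range 1 = [0] from rfl]; exact List.isChain_singleton _
  | succ n ih =>
    have h1 : (List.range (n + 2)).map f = f 0 :: (List.range (n + 1)).map (fun i => f (i + 1)) := by
      rw [List.range_succ_eq_map]
      simp [Function.comp]
    have h2 : (List.range (n + 1)).map (fun i => f (i + 1)) =
        f 1 :: (List.range n).map (fun i => f (i + 2)) := by
      rw [List.range_succ_eq_map]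
      simp [Function.comp]
    rw [h1, h2, List.Chain', List.isChain_cons_cons, ← h2]
    exact ⟨hf 0, ih _ (fun i => hf (i + 1))⟩

theorem P_sum_le_one (x : A) : ∑' t, (S.P x t : ℝ≥0∞) ≤ 1 := by
  by_cases h : ∃ t, S.rel x t
  · exact (S.sum_one x h).le
  · have hz : ∀ t, S.P x t = 0 := fun t => by
      by_contra hne
      exact h ⟨t, (S.pos_iff x t).1 (pos_iff_ne_zero.2 hne)⟩
    simp [hz]

theorem P_eq_zero_of_not_rel {x t : A} (h : ¬ S.rel x t) : (S.P x t : ℝ≥0∞) = 0 := by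
  have h1 : ¬ (0 < S.P x t) := fun hp => h ((S.pos_iff x t).1 hp)
  have h2 : S.P x t = 0 := by simpa [pos_iff_ne_zero] using h1
  simp [h2]

end PARS
end Aux
section Aux2
namespace PARS
variable {A : Type*} [Countable A] (S : PARS A)

/-- Sum of `pathProb (p ++ l)` over all extensions `l` of length `k` such that
the full path `p ++ l` satisfies `φ`. -/
noncomputable def VQ (φ : List A → Prop) (p : List A) (k : ℕ) : ℝ≥0∞ :=
  ∑' l : {l : List A // l.length = k ∧ φ (p ++ l)}, S.pathProb (p ++ l.1)

theorem VQ_zero_of_not (φ : List A → Prop) (p : List A) (hφ : ¬ φ p) : S.VQ φ p 0 = 0 := by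
  haveI : IsEmpty {l : List A // l.length = 0 ∧ φ (p ++ l)} := by
    refine ⟨fun x => ?_⟩
    obtain ⟨l, hl, hp⟩ := x
    rw [List.length_eq_zero_iff] at hl
    subst hl
    rw [List.append_nil] at hp
    exact hφ hp
  exact tsum_empty

theorem VQ_zero_of (φ : List A → Prop) (p : List A) (hφ : φ p) : S.VQ φ p 0 = S.pathProb p := by
  rw [VQ, tsum_eq_single (⟨[], by simp, by simpa⟩ : {l : List A // l.length = 0 ∧ φ (p ++ l)})]
  · simp
  · intro b hb
    exfalso
    apply hb
    apply Subtype.ext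
    have := b.2.1
    rwa [List.length_eq_zero_iff] at this

theorem VQ_succ (φ : List A → Prop) (p : List A) (k : ℕ) :
    S.VQ φ p (k + 1) = ∑' t : A, S.VQ φ (p ++ [t]) k := by
  have hne : ∀ l : {l : List A // l.length = k + 1 ∧ φ (p ++ l)}, l.1 ≠ [] := by
    intro l h
    have := l.2.1
    rw [h] at this
    simp at this
  let e : (Σ t : A, {l : List A // l.length = k ∧ φ (p ++ [t] ++ l)}) ≃
      {l : List A // l.length = k + 1 ∧ φ (p ++ l)} :=
    { toFun := fun x => ⟨x.1 :: x.2.1, by simp [x.2.2.1],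
        by have := x.2.2.2; rwa [← List.append_cons] at this⟩
      invFun := fun y => ⟨y.1.head (hne y), ⟨y.1.tail,
        by have := y.2.1; simp [List.length_tail, this],
        by have := y.2.2
           rw [← List.cons_head_tail (hne y)] at this
           rwa [List.append_cons] at this⟩⟩
      left_inv := fun x => rfl
      right_inv := fun y => Subtype.ext (List.cons_head_tail (hne y)) }
  calc S.VQ φ p (k + 1)
      = ∑' x : (Σ t : A, {l : List A // l.length = k ∧ φ (p ++ [t] ++ l)}),
          S.pathProb (p ++ (e x).1) := (Equiv.tsum_eq e _).symm
    _ = ∑' (t : A) (l : {l : List A // l.length = k ∧ φ (p ++ [t] ++ l)}),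
          S.pathProb (p ++ (e ⟨t, l⟩).1) := ENNReal.tsum_sigma' _
    _ = ∑' t : A, S.VQ φ (p ++ [t]) k := by
        refine tsum_congr fun t => tsum_congr fun l => ?_
        rw [show (e ⟨t, l⟩).1 = t :: l.1 from rfl, List.append_cons]

theorem VQ_le_pathProb (φ : List A → Prop) (k : ℕ) :
    ∀ p : List A, p ≠ [] → S.VQ φ p k ≤ S.pathProb p := by
  induction k with
  | zero =>
    intro p hp
    by_cases hφp : φ p
    · rw [VQ_zero_of _ _ _ hφp]
    · rw [VQ_zero_of_not _ _ _ hφp]; exact zero_le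
  | succ k ih =>
    intro p hp
    rw [VQ_succ]
    calc ∑' t : A, S.VQ φ (p ++ [t]) k
        ≤ ∑' t : A, S.pathProb (p ++ [t]) :=
          Summable.tsum_le_tsum (fun t => ih _ (by simp)) ENNReal.summable ENNReal.summable
      _ = ∑' t : A, S.pathProb p * (S.P (p.getLast hp) t : ℝ≥0∞) :=
          tsum_congr fun t => S.pathProb_append_singleton p hp t
      _ = S.pathProb p * ∑' t : A, (S.P (p.getLast hp) t : ℝ≥0∞) := ENNReal.tsum_mul_left
      _ ≤ S.pathProb p * 1 := mul_le_mul_right (S.P_sum_le_one _) _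
      _ = S.pathProb p := mul_one _

theorem VQ_antitone (φ : List A → Prop) (hφ : ∀ l t, φ (l ++ [t]) → φ l)
    (p : List A) (hp : p ≠ []) : Antitone (S.VQ φ p) := by
  have key : ∀ k, ∀ p : List A, p ≠ [] → S.VQ φ p (k + 1) ≤ S.VQ φ p k := by
    intro k
    induction k with
    | zero =>
      intro p hp
      by_cases hφp : φ p
      · rw [VQ_zero_of _ _ _ hφp]; exact S.VQ_le_pathProb φ 1 p hp
      · have hz : ∀ t : A, S.VQ φ (p ++ [t]) 0 = 0 :=
          fun t => S.VQ_zero_of_not φ _ (fun h => hφp (hφ p t h))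
        rw [VQ_succ, VQ_zero_of_not _ _ _ hφp, tsum_congr hz, tsum_zero]
    | succ k ih =>
      intro p hp
      rw [VQ_succ, VQ_succ]
      exact Summable.tsum_le_tsum (fun t => ih _ (by simp)) ENNReal.summable ENNReal.summable
  exact antitone_nat_of_succ_le (fun k => key k p hp)

theorem VQ_pair (φ : List A → Prop)
    (hφ : ∀ x t l, φ (x :: t :: l) ↔ S.rel x t ∧ φ (t :: l)) (x t : A) (k : ℕ) :
    S.VQ φ [x, t] k = (S.P x t : ℝ≥0∞) * S.VQ φ [t] k := by
  by_cases hr : S.rel x t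
  · have he : ∀ l : List A, (l.length = k ∧ φ ([x, t] ++ l)) ↔ (l.length = k ∧ φ ([t] ++ l)) := by
      intro l
      constructor
      · rintro ⟨h1, h2⟩; exact ⟨h1, ((hφ x t l).1 h2).2⟩
      · rintro ⟨h1, h2⟩; exact ⟨h1, (hφ x t l).2 ⟨hr, h2⟩⟩
    have step : ∑' c : {l : List A // l.length = k ∧ φ ([x, t] ++ l)},
        (S.P x t : ℝ≥0∞) * S.pathProb ([t] ++ c.1) =
        ∑' b : {l : List A // l.length = k ∧ φ ([t] ++ l)},
        (S.P x t : ℝ≥0∞) * S.pathProb ([t] ++ b.1) := by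
      exact Equiv.tsum_eq (Equiv.subtypeEquivRight he)
        (fun b : {l : List A // l.length = k ∧ φ ([t] ++ l)} =>
          (S.P x t : ℝ≥0∞) * S.pathProb ([t] ++ b.1))
    calc S.VQ φ [x, t] k
        = ∑' c : {l : List A // l.length = k ∧ φ ([x, t] ++ l)},
            (S.P x t : ℝ≥0∞) * S.pathProb ([t] ++ c.1) :=
          tsum_congr fun c => S.pathProb_cons_cons x t c.1
      _ = ∑' b : {l : List A // l.length = k ∧ φ ([t] ++ l)},
            (S.P x t : ℝ≥0∞) * S.pathProb ([t] ++ b.1) := step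
      _ = (S.P x t : ℝ≥0∞) * S.VQ φ [t] k := ENNReal.tsum_mul_left
  · haveI : IsEmpty {l : List A // l.length = k ∧ φ ([x, t] ++ l)} :=
      ⟨fun y => hr ((hφ x t y.1).1 y.2.2).1⟩
    rw [VQ, tsum_empty, S.P_eq_zero_of_not_rel hr, zero_mul]

end PARS
end Aux2
section Aux3
namespace PARS
variable {A : Type*} [Countable A] (S : PARS A)

def lastNF (l : List A) : Prop := ∃ t, l.getLast? = some t ∧ NormalForm S.rel t

def phiC : List A → Prop := fun l => l.Chain' S.rel

def phiD : List A → Prop := fun l => l.Chain' S.rel ∧ S.lastNF l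

/-- mass of `k`-step paths from `x`. -/
noncomputable def Bx (x : A) (k : ℕ) : ℝ≥0∞ := S.VQ S.phiC [x] k

/-- mass of `k`-step paths from `x` ending in a normal form. -/
noncomputable def Dx (x : A) (k : ℕ) : ℝ≥0∞ := S.VQ S.phiD [x] k

theorem phiC_pair : ∀ x t (l : List A), S.phiC (x :: t :: l) ↔ S.rel x t ∧ S.phiC (t :: l) := by
  intro x t l
  simp [phiC, List.Chain', List.isChain_cons_cons]

theorem phiD_pair : ∀ x t (l : List A), S.phiD (x :: t :: l) ↔ S.rel x t ∧ S.phiD (t :: l) := by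
  intro x t l
  simp only [phiD, lastNF, List.Chain', List.isChain_cons_cons, List.getLast?_cons_cons]
  tauto

theorem Bx_succ (x : A) (k : ℕ) : S.Bx x (k + 1) = ∑' t : A, (S.P x t : ℝ≥0∞) * S.Bx t k := by
  rw [Bx, VQ_succ]
  exact tsum_congr fun t => S.VQ_pair S.phiC (S.phiC_pair) x t k

theorem Dx_succ (x : A) (k : ℕ) : S.Dx x (k + 1) = ∑' t : A, (S.P x t : ℝ≥0∞) * S.Dx t k := by
  rw [Dx, VQ_succ]
  exact tsum_congr fun t => S.VQ_pair S.phiD (S.phiD_pair) x t k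

theorem Bx_zero (x : A) : S.Bx x 0 = 1 := by
  rw [Bx, VQ_zero_of _ _ _ (by exact List.isChain_singleton _), pathProb_singleton]

theorem Dx_zero_of (x : A) (h : NormalForm S.rel x) : S.Dx x 0 = 1 := by
  rw [Dx, VQ_zero_of _ _ _ (by exact ⟨by exact List.isChain_singleton _, ⟨x, by simp, h⟩⟩), pathProb_singleton]

theorem Dx_zero_of_not (x : A) (h : ¬ NormalForm S.rel x) : S.Dx x 0 = 0 := by
  refine S.VQ_zero_of_not _ _ ?_
  rintro ⟨-, t, ht, hnf⟩
  simp at ht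
  subst ht
  exact h hnf

theorem claim1 : ∀ (k : ℕ) (x : A), S.Bx x k + ∑ j ∈ Finset.range k, S.Dx x j = 1 := by
  intro k
  induction k with
  | zero => intro x; simp [Bx_zero]
  | succ k ih =>
    intro x
    rw [Finset.sum_range_succ', Bx_succ]
    have hD : ∀ j ∈ Finset.range k, S.Dx x (j + 1) = ∑' t : A, (S.P x t : ℝ≥0∞) * S.Dx t j :=
      fun j _ => S.Dx_succ x j
    rw [Finset.sum_congr rfl hD]
    have hswap : ∑ j ∈ Finset.range k, ∑' t : A, (S.P x t : ℝ≥0∞) * S.Dx t j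
        = ∑' t : A, ∑ j ∈ Finset.range k, (S.P x t : ℝ≥0∞) * S.Dx t j :=
      (Summable.tsum_finsetSum (fun j _ => ENNReal.summable)).symm
    rw [hswap]
    have hgroup : ∑' t : A, (S.P x t : ℝ≥0∞) * S.Bx t k
        + ∑' t : A, ∑ j ∈ Finset.range k, (S.P x t : ℝ≥0∞) * S.Dx t j
        = ∑' t : A, (S.P x t : ℝ≥0∞) := by
      rw [← ENNReal.tsum_add]
      refine tsum_congr fun t => ?_
      rw [← Finset.mul_sum, ← mul_add, ih t, mul_one]
    rw [← add_assoc, hgroup]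
    by_cases hx : NormalForm S.rel x
    · have hz : ∀ t, (S.P x t : ℝ≥0∞) = 0 := fun t =>
        S.P_eq_zero_of_not_rel (fun hr => hx ⟨t, hr⟩)
      rw [S.Dx_zero_of x hx, tsum_congr hz, tsum_zero, zero_add]
    · rw [S.Dx_zero_of_not x hx, add_zero]
      exact S.sum_one x (not_not.1 hx)

theorem chain'_reflTransGen : ∀ (l : List A) (x : A), (x :: l).Chain' S.rel →
    Relation.ReflTransGen S.rel x ((x :: l).getLast (by simp)) := by
  intro l
  induction l with
  | nil => intro x _; exact Relation.ReflTransGen.refl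
  | cons y l ih =>
    intro x h
    rw [List.Chain', List.isChain_cons_cons] at h
    rw [List.getLast_cons (by simp)]
    exact Relation.ReflTransGen.head h.1 (ih y h.2)

theorem probNF_eq (s : A) : S.probNF s = ∑' n : ℕ, S.Dx s n := by
  have h1 : S.probNF s
      = ∑' y : Σ t : NFof S.rel s, {l : List A // IsPath S.rel s t.1 l}, S.pathProb y.2.1 := by
    simp only [probNF, probReach]
    exact (ENNReal.tsum_sigma'
      (fun y : Σ t : NFof S.rel s, {l : List A // IsPath S.rel s t.1 l} => S.pathProb y.2.1)).symm
  have h2 : ∑' n : ℕ, S.Dx s n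
      = ∑' x : Σ n : ℕ, {l : List A // l.length = n ∧ S.phiD ([s] ++ l)},
          S.pathProb ([s] ++ x.2.1) := by
    simp only [Dx, VQ]
    exact (ENNReal.tsum_sigma'
      (fun x : Σ n : ℕ, {l : List A // l.length = n ∧ S.phiD ([s] ++ l)} =>
        S.pathProb ([s] ++ x.2.1))).symm
  rw [h1, h2]
  have hg : ∀ x : Σ n : ℕ, {l : List A // l.length = n ∧ S.phiD ([s] ++ l)},
      (s :: x.2.1).Chain' S.rel ∧
      NormalForm S.rel ((s :: x.2.1).getLast (by simp)) ∧
      Relation.ReflTransGen S.rel s ((s :: x.2.1).getLast (by simp)) := by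
    intro x
    have hx := x.2.2.2
    simp only [phiD, lastNF] at hx
    obtain ⟨hchain, t, hsome, hnf⟩ := hx
    have hchain' : (s :: x.2.1).Chain' S.rel := hchain
    have hlast : (s :: x.2.1).getLast? = some ((s :: x.2.1).getLast (by simp)) :=
      List.getLast?_eq_getLast (by simp)
    have hsome' : (s :: x.2.1).getLast? = some t := hsome
    rw [hlast] at hsome'
    have ht : t = (s :: x.2.1).getLast (by simp) := (Option.some.inj hsome').symm
    subst ht
    exact ⟨hchain', hnf, S.chain'_reflTransGen x.2.1 s hchain'⟩
  let g : (Σ n : ℕ, {l : List A // l.length = n ∧ S.phiD ([s] ++ l)})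
      → Σ t : NFof S.rel s, {l : List A // IsPath S.rel s t.1 l} :=
    fun x => ⟨⟨(s :: x.2.1).getLast (by simp), (hg x).2.1, (hg x).2.2⟩,
      ⟨s :: x.2.1, (hg x).1, rfl, List.getLast?_eq_getLast (by simp)⟩⟩
  have hbij : Function.Bijective g := by
    constructor
    · intro a b hab
      have h3 : s :: a.2.1 = s :: b.2.1 := congrArg (fun y => y.2.1) hab
      have hl : a.2.1 = b.2.1 := by simpa using h3
      obtain ⟨n, l, hlen, hphi⟩ := a
      obtain ⟨m, l2, hlen2, hphi2⟩ := b
      simp only at hl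
      subst hl
      have hnm : n = m := by rw [← hlen, ← hlen2]
      subst hnm
      rfl
    · rintro ⟨⟨t, htnf, htr⟩, ⟨l, hchain, hhead, hlast⟩⟩
      obtain ⟨tail, rfl⟩ : ∃ tail, l = s :: tail := by
        cases l with
        | nil => simp at hhead
        | cons a l2 =>
          refine ⟨l2, ?_⟩
          simp only [List.head?_cons, Option.some.injEq] at hhead
          rw [hhead]
      have hlast2 : (s :: tail).getLast? = some ((s :: tail).getLast (by simp)) :=
        List.getLast?_eq_getLast (by simp)
      have ht' : t = (s :: tail).getLast (by simp) := by
        have h5 : (some t : Option A) = some ((s :: tail).getLast (by simp)) := by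
          rw [← hlast2]; exact hlast.symm
        exact Option.some.inj h5
      subst ht'
      refine ⟨⟨tail.length, tail, rfl, ?_⟩, rfl⟩
      exact ⟨hchain, ⟨_, List.getLast?_eq_getLast (by simp), htnf⟩⟩
  rw [← Equiv.tsum_eq (Equiv.ofBijective g hbij)
    (fun y : Σ t : NFof S.rel s, {l : List A // IsPath S.rel s t.1 l} => S.pathProb y.2.1)]
  exact tsum_congr fun x => rfl

end PARS
end Aux3
section Aux4
namespace PARS
variable {A : Type*} [Countable A] (S : PARS A)

/-- `l` has no prefix in `Stop`. -/
def Ok (Stop : Set (List A)) (l : List A) : Prop := ∀ q, q <+: l → q ∉ Stop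

def phiW (Stop : Set (List A)) : List A → Prop :=
  fun l => l.Chain' S.rel ∧ Ok Stop l

theorem phiW_prefix (Stop : Set (List A)) :
    ∀ (l : List A) (t : A), S.phiW Stop (l ++ [t]) → S.phiW Stop l := by
  rintro l t ⟨hc, hok⟩
  exact ⟨(List.isChain_append.1 hc).1, fun q hq => hok q (hq.trans (List.prefix_append l [t]))⟩

noncomputable def Wx (Stop : Set (List A)) (p : List A) (k : ℕ) : ℝ≥0∞ :=
  S.VQ (S.phiW Stop) p k

noncomputable def Mx (Stop : Set (List A)) (p : List A) : ℝ≥0∞ :=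
  ⨅ k, S.Wx Stop p k

theorem tsum_pathProb_append (p : List A) (hp : p ≠ []) :
    ∑' t : A, S.pathProb (p ++ [t]) ≤ S.pathProb p := by
  calc ∑' t : A, S.pathProb (p ++ [t])
      = ∑' t : A, S.pathProb p * (S.P (p.getLast hp) t : ℝ≥0∞) :=
        tsum_congr fun t => S.pathProb_append_singleton p hp t
    _ = S.pathProb p * ∑' t : A, (S.P (p.getLast hp) t : ℝ≥0∞) := ENNReal.tsum_mul_left
    _ ≤ S.pathProb p * 1 := mul_le_mul_right (S.P_sum_le_one _) _
    _ = S.pathProb p := mul_one _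

theorem Mx_le_tsum (Stop : Set (List A)) (p : List A) (hp : p ≠ []) :
    S.Mx Stop p ≤ ∑' t : A, S.Mx Stop (p ++ [t]) := by
  have h1 : S.Mx Stop p ≤ ⨅ k, S.Wx Stop p (k + 1) :=
    le_iInf fun k => iInf_le _ (k + 1)
  have h2 : ∀ k, S.Wx Stop p (k + 1) = ∑' t : A, S.Wx Stop (p ++ [t]) k :=
    fun k => S.VQ_succ _ p k
  have h3 : ⨅ k, ∑' t : A, S.Wx Stop (p ++ [t]) k = ∑' t : A, ⨅ k, S.Wx Stop (p ++ [t]) k := by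
    refine tsum_iInf_antitone _ (fun t => S.VQ_antitone _ (S.phiW_prefix Stop) _ (by simp)) ?_
    refine ne_top_of_le_ne_top (S.pathProb_ne_top p) ?_
    calc ∑' t : A, S.Wx Stop (p ++ [t]) 0
        ≤ ∑' t : A, S.pathProb (p ++ [t]) :=
          Summable.tsum_le_tsum (fun t => S.VQ_le_pathProb _ 0 _ (by simp)) ENNReal.summable ENNReal.summable
      _ ≤ S.pathProb p := S.tsum_pathProb_append p hp
  calc S.Mx Stop p ≤ ⨅ k, S.Wx Stop p (k + 1) := h1
    _ = ⨅ k, ∑' t : A, S.Wx Stop (p ++ [t]) k := by simp only [h2]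
    _ = ∑' t : A, S.Mx Stop (p ++ [t]) := h3

theorem Mx_pos_props (Stop : Set (List A)) (p : List A) (hpos : 0 < S.Mx Stop p) :
    p.Chain' S.rel ∧ Ok Stop p := by
  have h0 : 0 < S.Wx Stop p 0 := lt_of_lt_of_le hpos (iInf_le _ 0)
  by_contra hcon
  have : S.Wx Stop p 0 = 0 := S.VQ_zero_of_not _ _ hcon
  rw [this] at h0
  exact lt_irrefl _ h0

theorem Mx_step (Stop : Set (List A)) (p : List A) (hp : p ≠ [])
    (hpos : 0 < S.Mx Stop p) : ∃ t, 0 < S.Mx Stop (p ++ [t]) := by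
  by_contra hcon
  push_neg at hcon
  have hz : ∀ t, S.Mx Stop (p ++ [t]) = 0 := fun t => le_antisymm (hcon t) (zero_le)
  have := S.Mx_le_tsum Stop p hp
  rw [tsum_congr hz, tsum_zero] at this
  exact lt_irrefl _ (lt_of_lt_of_le hpos this)

/-- The sequence of finite paths produced by the descent argument. -/
noncomputable def descentSeq (Stop : Set (List A)) (s : A) (hpos : 0 < S.Mx Stop [s]) :
    ℕ → {p : List A // p ≠ [] ∧ 0 < S.Mx Stop p}
  | 0 => ⟨[s], by simp, hpos⟩
  | n + 1 =>
    ⟨(descentSeq Stop s hpos n).1 ++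
        [Classical.choose (S.Mx_step Stop (descentSeq Stop s hpos n).1
          (descentSeq Stop s hpos n).2.1 (descentSeq Stop s hpos n).2.2)], by simp,
      Classical.choose_spec (S.Mx_step Stop (descentSeq Stop s hpos n).1
        (descentSeq Stop s hpos n).2.1 (descentSeq Stop s hpos n).2.2)⟩

theorem Mx_eq_zero (Stop : Set (List A)) (s : A)
    (hStop : ∀ δ : {f : ℕ → A // f 0 = s ∧ ∀ n, S.rel (f n) (f (n + 1))},
      ∃ n, (List.range (n + 1)).map δ.1 ∈ Stop) :
    S.Mx Stop [s] = 0 := by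
  by_contra h
  have hpos : 0 < S.Mx Stop [s] := pos_iff_ne_zero.2 h
  set g := S.descentSeq Stop s hpos with hgdef
  have hgs : ∀ n, ∃ t, (g (n + 1)).1 = (g n).1 ++ [t] := by
    intro n
    rw [hgdef]
    exact ⟨_, rfl⟩
  have h0 : (g 0).1 = [s] := by rw [hgdef, descentSeq]
  set δ : ℕ → A := fun n => (g n).1.getLast (g n).2.1 with hδdef
  have hlastq : ∀ n, (g n).1.getLast? = some (δ n) :=
    fun n => List.getLast?_eq_getLast (g n).2.1
  have hδ0 : δ 0 = s := by
    have h1 := hlastq 0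
    rw [h0] at h1
    simpa using h1.symm
  have hcons : ∀ n, (g (n + 1)).1 = (g n).1 ++ [δ (n + 1)] := by
    intro n
    obtain ⟨t, ht⟩ := hgs n
    have h1 := hlastq (n + 1)
    rw [ht, List.getLast?_concat] at h1
    rw [ht, Option.some.inj h1]
  have hlist : ∀ n, (g n).1 = (List.range (n + 1)).map δ := by
    intro n
    induction n with
    | zero => rw [h0]; simp [show List.range 1 = [0] from rfl, hδ0]
    | succ n ih =>
      rw [hcons n, ih]
      conv_rhs => rw [List.range_succ]
      rw [List.map_append]
      simp
  have hprops : ∀ n, ((g n).1).Chain' S.rel ∧ Ok Stop (g n).1 :=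
    fun n => S.Mx_pos_props Stop (g n).1 (g n).2.2
  have hrel : ∀ n, S.rel (δ n) (δ (n + 1)) := by
    intro n
    have hc := (hprops (n + 1)).1
    rw [hcons n] at hc
    obtain ⟨-, -, hrel'⟩ := List.isChain_append.1 hc
    refine hrel' (δ n) ?_ (δ (n + 1)) rfl
    rw [hlastq n]
    rfl
  obtain ⟨n, hn⟩ := hStop ⟨δ, hδ0, hrel⟩
  rw [← hlist n] at hn
  exact (hprops n).2 (g n).1 (List.prefix_refl _) hn

end PARS
end Aux4
section Aux5
namespace PARS
variable {A : Type*} [Countable A] (S : PARS A)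

theorem fiber_le (q : List A) (hq : q ≠ []) (m : ℕ) :
    ∑' r : {r : List A // (q ++ r).length = m ∧ (q ++ r).Chain' S.rel},
      S.pathProb (q ++ r.1) ≤ S.pathProb q := by
  rcases le_or_gt q.length m with hle | hlt
  · have he : ∀ r : List A, ((q ++ r).length = m ∧ (q ++ r).Chain' S.rel)
        ↔ (r.length = m - q.length ∧ S.phiC (q ++ r)) := by
      intro r
      constructor
      · rintro ⟨h1, h2⟩
        refine ⟨?_, h2⟩
        rw [List.length_append] at h1
        omega
      · rintro ⟨h1, h2⟩
        refine ⟨?_, h2⟩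
        rw [List.length_append, h1]
        omega
    have heq : ∑' r : {r : List A // (q ++ r).length = m ∧ (q ++ r).Chain' S.rel},
        S.pathProb (q ++ r.1) = S.VQ S.phiC q (m - q.length) := by
      exact Equiv.tsum_eq (Equiv.subtypeEquivRight he)
        (fun r : {l : List A // l.length = m - q.length ∧ S.phiC (q ++ l)} =>
          S.pathProb (q ++ r.1))
    rw [heq]
    exact S.VQ_le_pathProb _ _ q hq
  · haveI : IsEmpty {r : List A // (q ++ r).length = m ∧ (q ++ r).Chain' S.rel} := by
      refine ⟨fun r => ?_⟩
      have := r.2.1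
      rw [List.length_append] at this
      omega
    rw [tsum_empty]
    exact zero_le

theorem Bx_le_stop (Stop : Set (List A)) (hne : ∀ q ∈ Stop, q ≠ []) (s : A) (n : ℕ) :
    S.Bx s n ≤ (∑' q : Stop, S.pathProb q.1) + S.Wx Stop [s] n := by
  classical
  set T := {l : List A // l.length = n ∧ S.phiC ([s] ++ l)} with hT
  set f : T → ℝ≥0∞ := fun l => S.pathProb ([s] ++ l.1) with hf
  set sset : Set T := {x | Ok Stop ([s] ++ x.1)} with hsset
  have hsplit : ∑' x : sset, f x.1 + ∑' x : ↑ssetᶜ, f x.1 = ∑' x : T, f x :=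
    Summable.tsum_add_tsum_compl ENNReal.summable ENNReal.summable
  have hok : ∑' x : sset, f x.1 = S.Wx Stop [s] n := by
    let e : ↑sset ≃ {l : List A // l.length = n ∧ S.phiW Stop ([s] ++ l)} :=
      { toFun := fun x => ⟨x.1.1, x.1.2.1, x.1.2.2, x.2⟩
        invFun := fun y => ⟨⟨y.1, y.2.1, y.2.2.1⟩, y.2.2.2⟩
        left_inv := fun x => rfl
        right_inv := fun y => rfl }
    exact Equiv.tsum_eq e
      (fun y : {l : List A // l.length = n ∧ S.phiW Stop ([s] ++ l)} =>
        S.pathProb ([s] ++ y.1))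
  have hx : ∀ x : ↑ssetᶜ, ∃ q r, q ∈ Stop ∧ q ++ r = [s] ++ x.1.1 := by
    intro x
    have hxbad : ¬ Ok Stop ([s] ++ x.1.1) := x.2
    simp only [Ok, not_forall] at hxbad
    obtain ⟨q, hpre, hmem⟩ := hxbad
    obtain ⟨r, hr⟩ := hpre
    exact ⟨q, r, not_not.1 hmem, hr⟩
  choose qf rf hqmem hqr using hx
  let e : ↑ssetᶜ → Σ q : Stop, {r : List A // (q.1 ++ r).length = n + 1 ∧ (q.1 ++ r).Chain' S.rel} :=
    fun x => ⟨⟨qf x, hqmem x⟩, ⟨rf x,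
      by rw [hqr x]; simp [x.1.2.1, Nat.add_comm],
      by rw [hqr x]; exact x.1.2.2⟩⟩
  have hinj : Function.Injective e := by
    intro a b hab
    have h1 : qf a ++ rf a = qf b ++ rf b := congrArg (fun z => z.1.1 ++ z.2.1) hab
    have h2 : [s] ++ a.1.1 = [s] ++ b.1.1 := by rw [← hqr a, ← hqr b, h1]
    have h3 : a.1.1 = b.1.1 := by simpa using h2
    exact Subtype.ext (Subtype.ext h3)
  have h4 : ∑' x : ↑ssetᶜ, f x.1 ≤
      ∑' z : Σ q : Stop, {r : List A // (q.1 ++ r).length = n + 1 ∧ (q.1 ++ r).Chain' S.rel},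
        S.pathProb (z.1.1 ++ z.2.1) := by
    refine Summable.tsum_le_tsum_of_inj e hinj (fun c _ => zero_le) (fun x => ?_)
      ENNReal.summable ENNReal.summable
    show S.pathProb ([s] ++ x.1.1) ≤ S.pathProb (qf x ++ rf x)
    rw [hqr x]
  have h5 : ∑' z : Σ q : Stop, {r : List A // (q.1 ++ r).length = n + 1 ∧ (q.1 ++ r).Chain' S.rel},
      S.pathProb (z.1.1 ++ z.2.1) ≤ ∑' q : Stop, S.pathProb q.1 := by
    rw [ENNReal.tsum_sigma'
      (fun z : Σ q : Stop, {r : List A // (q.1 ++ r).length = n + 1 ∧ (q.1 ++ r).Chain' S.rel} =>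
        S.pathProb (z.1.1 ++ z.2.1))]
    exact Summable.tsum_le_tsum (fun q => S.fiber_le q.1 (hne q.1 q.2) (n + 1))
      ENNReal.summable ENNReal.summable
  calc S.Bx s n = ∑' x : T, f x := rfl
    _ = ∑' x : sset, f x.1 + ∑' x : ↑ssetᶜ, f x.1 := hsplit.symm
    _ ≤ (∑' q : Stop, S.pathProb q.1) + S.Wx Stop [s] n := by
        rw [hok, add_comm]
        exact add_le_add_left (h4.trans h5) _

omit [Countable A] in
theorem map_range_succ_cons (f : ℕ → A) (n : ℕ) :
    (List.range (n + 1)).map f = f 0 :: (List.range n).map (fun i => f (i + 1)) := by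
  rw [List.range_succ_eq_map]
  simp [Function.comp]

set_option maxHeartbeats 1000000 in
theorem tsum_mu_le (s : A) :
    (∑' δ : {f : ℕ → A // f 0 = s ∧ ∀ n, S.rel (f n) (f (n + 1))},
      ⨅ n, ∏ i ∈ Finset.range n, (S.P (δ.1 i) (δ.1 (i + 1)) : ℝ≥0∞)) ≤ ⨅ m, S.Bx s m := by
  classical
  set Δs := {f : ℕ → A // f 0 = s ∧ ∀ n, S.rel (f n) (f (n + 1))} with hΔs
  rw [ENNReal.tsum_eq_iSup_sum]
  refine iSup_le fun F => le_iInf fun m => ?_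
  set idx : Δs → Δs → ℕ := fun a b =>
    if h : ∃ i, a.1 i ≠ b.1 i then Classical.choose h else 0 with hidx
  set N := m + F.sup (fun a => F.sup (fun b => idx a b)) with hN
  have hmN : m ≤ N := Nat.le_add_right _ _
  have hdist : ∀ a ∈ F, ∀ b ∈ F, a ≠ b →
      (List.range (N + 1)).map a.1 ≠ (List.range (N + 1)).map b.1 := by
    intro a ha b hb hab heq
    have hex : ∃ i, a.1 i ≠ b.1 i := by
      by_contra hc
      push_neg at hc
      exact hab (Subtype.ext (funext hc))
    have hi : a.1 (idx a b) ≠ b.1 (idx a b) := by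
      rw [hidx]
      simp only [hex, dif_pos]
      exact Classical.choose_spec hex
    have hiN : idx a b < N + 1 := by
      have h1 : idx a b ≤ F.sup (fun b' => idx a b') := Finset.le_sup (f := fun b' => idx a b') hb
      have h2 : F.sup (fun b' => idx a b') ≤ F.sup (fun a' => F.sup (fun b' => idx a' b')) :=
        Finset.le_sup (f := fun a' => F.sup (fun b' => idx a' b')) ha
      exact Nat.lt_succ_of_le ((h1.trans h2).trans (hN ▸ Nat.le_add_left _ _))
    have := congrArg (fun l => l[idx a b]?) heq
    simp only [List.getElem?_map, List.getElem?_range hiN, Option.map_some] at this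
    exact hi (Option.some.inj this)
  -- embed into the index type of `Bx s N`
  set TN := {l : List A // l.length = N ∧ S.phiC ([s] ++ l)} with hTN
  have hemb : ∀ δ : Δs, ((List.range N).map (fun i => δ.1 (i + 1))).length = N ∧
      S.phiC ([s] ++ (List.range N).map (fun i => δ.1 (i + 1))) := by
    intro δ
    refine ⟨by simp, ?_⟩
    have h1 : [s] ++ (List.range N).map (fun i => δ.1 (i + 1)) = (List.range (N + 1)).map δ.1 := by
      rw [map_range_succ_cons δ.1 N, δ.2.1]
      rfl
    rw [h1]
    exact S.chain'_map_range δ.1 δ.2.2 N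
  let emb : Δs → TN := fun δ => ⟨(List.range N).map (fun i => δ.1 (i + 1)), hemb δ⟩
  have hembeq : ∀ δ : Δs, [s] ++ (emb δ).1 = (List.range (N + 1)).map δ.1 := by
    intro δ
    rw [map_range_succ_cons δ.1 N, δ.2.1]
    rfl
  have hinj : ∀ a ∈ F, ∀ b ∈ F, emb a = emb b → a = b := by
    intro a ha b hb heq
    by_contra hab
    apply hdist a ha b hb hab
    rw [← hembeq a, ← hembeq b, heq]
  calc ∑ δ ∈ F, ⨅ n, ∏ i ∈ Finset.range n, (S.P (δ.1 i) (δ.1 (i + 1)) : ℝ≥0∞)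
      ≤ ∑ δ ∈ F, S.pathProb ([s] ++ (emb δ).1) := by
        refine Finset.sum_le_sum fun δ _ => ?_
        rw [hembeq δ, S.pathProb_map_range δ.1 N]
        exact iInf_le _ N
    _ = ∑ y ∈ F.image emb, S.pathProb ([s] ++ y.1) := by rw [Finset.sum_image hinj]
    _ ≤ ∑' y : TN, S.pathProb ([s] ++ y.1) := ENNReal.sum_le_tsum _
    _ = S.Bx s N := rfl
    _ ≤ S.Bx s m := by
        refine S.VQ_antitone S.phiC ?_ [s] (by simp) hmN
        intro l t h
        exact (List.isChain_append.1 h).1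

end PARS
end Aux5
/-- if the set `Δ∞(s)` of infinite paths from `s` is countable,
then `P(s →∞)` equals the sum over all infinite paths `δ ∈ Δ∞(s)` of the
probability of `δ`, i.e. the limit (= infimum, as the sequence is
nonincreasing) of the partial products `∏_{i=1}^n P(s_{i-1}, s_i)`. -/
theorem probDiverge_eq_tsum_infinite_paths
    {A : Type*} [Countable A] (S : PARS A) (s : A)
    (hcount : Countable {f : ℕ → A // f 0 = s ∧ ∀ n, S.rel (f n) (f (n + 1))}) :
    S.probDiverge s =
      (∑' δ : {f : ℕ → A // f 0 = s ∧ ∀ n, S.rel (f n) (f (n + 1))},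
        ⨅ n, ∏ i ∈ Finset.range n, (S.P (δ.1 i) (δ.1 (i + 1)) : ℝ≥0∞)).toReal := by
  classical
  set U := ∑' δ : {f : ℕ → A // f 0 = s ∧ ∀ n, S.rel (f n) (f (n + 1))},
      ⨅ n, ∏ i ∈ Finset.range n, (S.P (δ.1 i) (δ.1 (i + 1)) : ℝ≥0∞) with hU
  set T := ∑' k : ℕ, S.Dx s k with hT
  have hA : ∀ n, S.Bx s n + ∑ j ∈ Finset.range n, S.Dx s j = 1 := fun n => S.claim1 n s
  have hTle : T ≤ 1 := by
    rw [hT, ENNReal.tsum_eq_iSup_nat]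
    exact iSup_le fun n => le_add_self.trans_eq (hA n)
  have hpartial : ∀ n, (∑ j ∈ Finset.range n, S.Dx s j) ≠ ∞ := fun n =>
    ne_top_of_le_ne_top ENNReal.one_ne_top (le_add_self.trans_eq (hA n))
  have hBx : ∀ n, S.Bx s n = 1 - ∑ j ∈ Finset.range n, S.Dx s j :=
    fun n => ENNReal.eq_sub_of_add_eq (hpartial n) (hA n)
  have hInfA : ⨅ n, S.Bx s n = 1 - T := by
    calc ⨅ n, S.Bx s n = ⨅ n, (1 - ∑ j ∈ Finset.range n, S.Dx s j) := iInf_congr hBx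
      _ = 1 - ⨆ n, ∑ j ∈ Finset.range n, S.Dx s j := (ENNReal.sub_iSup ENNReal.one_ne_top).symm
      _ = 1 - T := by rw [hT, ENNReal.tsum_eq_iSup_nat]
  have hUle : U ≤ ⨅ m, S.Bx s m := S.tsum_mu_le s
  have hle2 : ⨅ n, S.Bx s n ≤ U := by
    refine ENNReal.le_of_forall_pos_le_add fun ε hε hUtop' => ?_
    obtain ⟨enc, henc⟩ :=
      exists_injective_nat {f : ℕ → A // f 0 = s ∧ ∀ n, S.rel (f n) (f (n + 1))}
    set ε2 : ℝ≥0∞ := (ε : ℝ≥0∞) * 2⁻¹ with hε2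
    have hε2pos : ∀ δ : {f : ℕ → A // f 0 = s ∧ ∀ n, S.rel (f n) (f (n + 1))},
        ε2 * (2⁻¹ : ℝ≥0∞) ^ enc δ ≠ 0 := by
      intro δ
      refine mul_ne_zero (mul_ne_zero ?_ ?_) (pow_ne_zero _ ?_)
      · exact ENNReal.coe_ne_zero.2 hε.ne'
      · exact ENNReal.inv_ne_zero.2 ENNReal.ofNat_ne_top
      · exact ENNReal.inv_ne_zero.2 ENNReal.ofNat_ne_top
    have hμtop : ∀ δ : {f : ℕ → A // f 0 = s ∧ ∀ n, S.rel (f n) (f (n + 1))},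
        (⨅ n, ∏ i ∈ Finset.range n, (S.P (δ.1 i) (δ.1 (i + 1)) : ℝ≥0∞)) ≠ ∞ := fun δ =>
      ne_top_of_le_ne_top ENNReal.one_ne_top ((iInf_le _ 0).trans_eq (by simp))
    have hchoice : ∀ δ : {f : ℕ → A // f 0 = s ∧ ∀ n, S.rel (f n) (f (n + 1))},
        ∃ n, S.pathProb ((List.range (n + 1)).map δ.1) <
          (⨅ n, ∏ i ∈ Finset.range n, (S.P (δ.1 i) (δ.1 (i + 1)) : ℝ≥0∞))
            + ε2 * (2⁻¹ : ℝ≥0∞) ^ enc δ := by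
      intro δ
      have h1 : (⨅ n, S.pathProb ((List.range (n + 1)).map δ.1))
          = ⨅ n, ∏ i ∈ Finset.range n, (S.P (δ.1 i) (δ.1 (i + 1)) : ℝ≥0∞) :=
        iInf_congr fun n => S.pathProb_map_range δ.1 n
      refine iInf_lt_iff.1 ?_
      rw [h1]
      exact ENNReal.lt_add_right (hμtop δ) (hε2pos δ)
    choose nδ hnδ using hchoice
    set Stop : Set (List A) :=
      Set.range (fun δ : {f : ℕ → A // f 0 = s ∧ ∀ n, S.rel (f n) (f (n + 1))} =>
        (List.range (nδ δ + 1)).map δ.1) with hStop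
    have hStopne : ∀ q ∈ Stop, q ≠ [] := by
      rintro q ⟨δ, rfl⟩
      simp
    have hM0 : S.Mx Stop [s] = 0 :=
      S.Mx_eq_zero Stop s (fun δ => ⟨nδ δ, Set.mem_range_self δ⟩)
    have h7 : ⨅ n, S.Bx s n ≤ ∑' q : Stop, S.pathProb q.1 := by
      have h := le_iInf fun n =>
        (iInf_le (fun n => S.Bx s n) n).trans (S.Bx_le_stop Stop hStopne s n)
      rw [← ENNReal.add_iInf] at h
      rwa [show (⨅ n, S.Wx Stop [s] n) = S.Mx Stop [s] from rfl, hM0, add_zero] at h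
    have h8 : ∑' q : Stop, S.pathProb q.1 ≤
        ∑' δ : {f : ℕ → A // f 0 = s ∧ ∀ n, S.rel (f n) (f (n + 1))},
          S.pathProb ((List.range (nδ δ + 1)).map δ.1) := by
      have hpk : ∀ q : Stop, ∃ δ, (List.range (nδ δ + 1)).map δ.1 = q.1 := fun q => q.2
      choose pick hpick using hpk
      refine Summable.tsum_le_tsum_of_inj pick ?_ (fun c _ => zero_le) (fun q => ?_)
        ENNReal.summable ENNReal.summable
      · intro a b hab
        apply Subtype.ext
        rw [← hpick a, ← hpick b, hab]
      · rw [hpick q]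
    have h9 : ∑' δ : {f : ℕ → A // f 0 = s ∧ ∀ n, S.rel (f n) (f (n + 1))},
        S.pathProb ((List.range (nδ δ + 1)).map δ.1) ≤ U + ε2 * 2 := by
      calc ∑' δ : {f : ℕ → A // f 0 = s ∧ ∀ n, S.rel (f n) (f (n + 1))},
            S.pathProb ((List.range (nδ δ + 1)).map δ.1)
          ≤ ∑' δ : {f : ℕ → A // f 0 = s ∧ ∀ n, S.rel (f n) (f (n + 1))},
            ((⨅ n, ∏ i ∈ Finset.range n, (S.P (δ.1 i) (δ.1 (i + 1)) : ℝ≥0∞))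
              + ε2 * (2⁻¹ : ℝ≥0∞) ^ enc δ) :=
            Summable.tsum_le_tsum (fun δ => (hnδ δ).le) ENNReal.summable ENNReal.summable
        _ = U + ∑' δ : {f : ℕ → A // f 0 = s ∧ ∀ n, S.rel (f n) (f (n + 1))},
            ε2 * (2⁻¹ : ℝ≥0∞) ^ enc δ := by rw [ENNReal.tsum_add, ← hU]
        _ = U + ε2 * ∑' δ : {f : ℕ → A // f 0 = s ∧ ∀ n, S.rel (f n) (f (n + 1))},
            (2⁻¹ : ℝ≥0∞) ^ enc δ := by rw [ENNReal.tsum_mul_left]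
        _ ≤ U + ε2 * 2 := by
            refine add_le_add_right (mul_le_mul_right ?_ _) _
            have hg : ∑' δ : {f : ℕ → A // f 0 = s ∧ ∀ n, S.rel (f n) (f (n + 1))},
                ((2 : ℝ≥0∞)⁻¹) ^ enc δ ≤ ∑' n : ℕ, (2⁻¹ : ℝ≥0∞) ^ n :=
              Summable.tsum_le_tsum_of_inj enc henc (fun c _ => zero_le) (fun δ => le_rfl)
                ENNReal.summable ENNReal.summable
            refine hg.trans ?_
            rw [ENNReal.tsum_geometric, ENNReal.one_sub_inv_two, inv_inv]
    have hε22 : ε2 * 2 = (ε : ℝ≥0∞) := by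
      rw [hε2, mul_assoc, ENNReal.inv_mul_cancel (by norm_num) ENNReal.ofNat_ne_top, mul_one]
    calc ⨅ n, S.Bx s n ≤ U + ε2 * 2 := h7.trans (h8.trans h9)
      _ = U + (ε : ℝ≥0∞) := by rw [hε22]
  have hMain : ⨅ n, S.Bx s n = U := le_antisymm hle2 hUle
  have hUT : U + T = 1 := by
    rw [← hMain, hInfA]
    exact tsub_add_cancel_of_le hTle
  have hUtop : U ≠ ∞ :=
    ne_top_of_le_ne_top ENNReal.one_ne_top (le_self_add.trans_eq hUT)
  have hTtop : T ≠ ∞ := ne_top_of_le_ne_top ENNReal.one_ne_top hTle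
  have htoReal : U.toReal + T.toReal = 1 := by
    rw [← ENNReal.toReal_add hUtop hTtop, hUT]
    simp
  have hgoal : S.probDiverge s = 1 - T.toReal := by
    rw [PARS.probDiverge, S.probNF_eq s, ← hT]
  rw [hgoal]
  linarith
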